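/- For every real δ > 0 and every z with 0 ≤ z ≤ δ, the ratio ϖ_l(z) = m_l(z)/m, where m_l(z) = ∫_{{ξ∈ℝ³ : ‖ξ‖≤δ, ξ₃≥z}} ‖ξ‖² dξ and m = ∫_{{ξ∈ℝ³ : ‖ξ‖≤δ}} ‖ξ‖² dξ, equals 1/2 − 5z/(8δ) + z⁵/(8δ⁵). -/

import Mathlib

open MeasureTheory Real Set

lemma disk_integral (c ρ : ℝ) (hρ : 0 ≤ ρ) :
    ∫ y in {y : Fin 2 → ℝ | y 0 ^ 2 + y 1 ^ 2 ≤ ρ ^ 2}, (c + (y 0 ^ 2 + y 1 ^ 2))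
      = π * (c * ρ ^ 2 + ρ ^ 4 / 2) := by
  have h1 : ∫ y in {y : Fin 2 → ℝ | y 0 ^ 2 + y 1 ^ 2 ≤ ρ ^ 2}, (c + (y 0 ^ 2 + y 1 ^ 2))
      = ∫ p in {p : ℝ × ℝ | p.1 ^ 2 + p.2 ^ 2 ≤ ρ ^ 2}, (c + (p.1 ^ 2 + p.2 ^ 2)) := by
    rw [← ((volume_preserving_finTwoArrow ℝ).symm).setIntegral_preimage_emb
      (MeasurableEquiv.measurableEmbedding _)
      (fun y : Fin 2 → ℝ => c + (y 0 ^ 2 + y 1 ^ 2))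
      {y : Fin 2 → ℝ | y 0 ^ 2 + y 1 ^ 2 ≤ ρ ^ 2}]
    congr 1
  rw [h1]
  have hD : MeasurableSet {p : ℝ × ℝ | p.1 ^ 2 + p.2 ^ 2 ≤ ρ ^ 2} := by
    apply measurableSet_le <;> fun_prop
  rw [← integral_indicator hD, ← integral_comp_polarCoord_symm]
  have h2 : ∫ q in polarCoord.target,
      q.1 • ({p : ℝ × ℝ | p.1 ^ 2 + p.2 ^ 2 ≤ ρ ^ 2}.indicator
        (fun p => c + (p.1 ^ 2 + p.2 ^ 2)) (polarCoord.symm q))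
      = ∫ q in (Ioi (0:ℝ)) ×ˢ (Ioo (-π) π),
          (Ioc (0:ℝ) ρ).indicator (fun r => r * (c + r ^ 2)) q.1 * (1:ℝ) := by
    rw [polarCoord_target]
    apply setIntegral_congr_fun (by measurability)
    rintro ⟨r, θ⟩ ⟨hr, hθ⟩
    simp only [Set.mem_Ioi] at hr
    have hsymm : (polarCoord.symm (r, θ)) = (r * cos θ, r * sin θ) := rfl
    have hnorm : (r * cos θ) ^ 2 + (r * sin θ) ^ 2 = r ^ 2 := by
      have := sin_sq_add_cos_sq θ; nlinarith
    by_cases h : r ≤ ρ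
    · have hmem : polarCoord.symm (r, θ) ∈ {p : ℝ × ℝ | p.1 ^ 2 + p.2 ^ 2 ≤ ρ ^ 2} := by
        rw [hsymm]; simp only [Set.mem_setOf_eq, hnorm]
        exact pow_le_pow_left₀ hr.le h 2
      simp only [Set.indicator_of_mem hmem,
        Set.indicator_of_mem (show r ∈ Ioc 0 ρ from ⟨hr, h⟩), smul_eq_mul]
      rw [hsymm]; simp only [hnorm]; ring
    · have hmem : polarCoord.symm (r, θ) ∉ {p : ℝ × ℝ | p.1 ^ 2 + p.2 ^ 2 ≤ ρ ^ 2} := by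
        rw [hsymm]; simp only [Set.mem_setOf_eq, hnorm]
        intro hc; nlinarith
      simp only [Set.indicator_of_notMem hmem,
        Set.indicator_of_notMem (show r ∉ Ioc 0 ρ by simp [h]), smul_eq_mul]
      simp
  rw [h2, Measure.volume_eq_prod]
  rw [show (∫ q in (Ioi (0:ℝ)) ×ˢ (Ioo (-π) π),
        (Ioc (0:ℝ) ρ).indicator (fun r => r * (c + r ^ 2)) q.1 * (1:ℝ)
          ∂(volume : Measure ℝ).prod volume)
      = (∫ r in Ioi (0:ℝ), (Ioc (0:ℝ) ρ).indicator (fun r => r * (c + r ^ 2)) r)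
          * (∫ _ in Ioo (-π) π, (1:ℝ)) from setIntegral_prod_mul (fun r : ℝ => (Ioc (0:ℝ) ρ).indicator (fun r => r * (c + r ^ 2)) r) (fun _ : ℝ => (1:ℝ)) _ _]
  rw [setIntegral_indicator measurableSet_Ioc]
  have hIs : Ioi (0:ℝ) ∩ Ioc 0 ρ = Ioc 0 ρ := by
    ext x
    simp only [mem_inter_iff, mem_Ioi, mem_Ioc]
    tauto
  rw [hIs, ← intervalIntegral.integral_of_le hρ]
  have hi : ∫ r in (0:ℝ)..ρ, r * (c + r ^ 2) = c * ρ ^ 2 / 2 + ρ ^ 4 / 4 := by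
    have he : (fun r : ℝ => r * (c + r ^ 2)) = fun r : ℝ => c * r ^ 1 + r ^ 3 := by
      funext r; ring
    rw [he, intervalIntegral.integral_add
      (by apply Continuous.intervalIntegrable; continuity)
      ((continuous_pow 3).intervalIntegrable 0 ρ),
      intervalIntegral.integral_const_mul, integral_pow, integral_pow]
    norm_num; ring
  rw [hi, setIntegral_const, Real.volume_real_Ioo, smul_eq_mul, mul_one,
    max_eq_left (by linarith [pi_pos] : (0:ℝ) ≤ π - -π)]
  ring


lemma euclidean_normsq (ξ : EuclideanSpace ℝ (Fin 3)) : ‖ξ‖ ^ 2 = ∑ i, ξ i ^ 2 := by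
  rw [EuclideanSpace.norm_eq, sq_sqrt (by positivity)]
  simp [Real.norm_eq_abs, sq_abs]


lemma cap_integral (δ a : ℝ) (hδ : 0 < δ) (ha : -δ ≤ a) (ha' : a ≤ δ) :
    ∫ ξ in {ξ : EuclideanSpace ℝ (Fin 3) | ‖ξ‖ ≤ δ ∧ a ≤ ξ 2}, ‖ξ‖ ^ 2
      = π / 2 * (δ ^ 4 * (δ - a) - (δ ^ 5 - a ^ 5) / 5) := by
  have hnormle : ∀ ξ : EuclideanSpace ℝ (Fin 3), (‖ξ‖ ≤ δ ↔ ∑ i, ξ i ^ 2 ≤ δ ^ 2) := by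
    intro ξ
    rw [← euclidean_normsq]
    constructor
    · intro h; exact pow_le_pow_left₀ (norm_nonneg _) h 2
    · intro h; nlinarith [norm_nonneg ξ]
  -- Step 1: transfer to `Fin 3 → ℝ`
  rw [← ((EuclideanSpace.volume_preserving_symm_measurableEquiv_toLp (Fin 3)).symm).setIntegral_preimage_emb
    (MeasurableEquiv.measurableEmbedding _) (fun ξ : EuclideanSpace ℝ (Fin 3) => ‖ξ‖ ^ 2)
    {ξ : EuclideanSpace ℝ (Fin 3) | ‖ξ‖ ≤ δ ∧ a ≤ ξ 2}]
  set T : Set (Fin 3 → ℝ) := {x | ∑ i, x i ^ 2 ≤ δ ^ 2 ∧ a ≤ x 2} with hTdef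
  have hpre1 : (MeasurableEquiv.toLp 2 (Fin 3 → ℝ)).symm.symm ⁻¹'
      {ξ : EuclideanSpace ℝ (Fin 3) | ‖ξ‖ ≤ δ ∧ a ≤ ξ 2} = T := by
    ext x
    simp only [Set.mem_preimage, Set.mem_setOf_eq, hTdef, hnormle]
    rfl
  have hmsum3 : Measurable fun x : Fin 3 → ℝ => ∑ i, x i ^ 2 :=
    Finset.measurable_sum _ fun i _ => (measurable_pi_apply i).pow_const 2
  have hT : MeasurableSet T :=
    (measurableSet_le hmsum3 measurable_const).inter
      (measurableSet_le measurable_const (measurable_pi_apply 2))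
  have h1 : (∫ x in (MeasurableEquiv.toLp 2 (Fin 3 → ℝ)).symm.symm ⁻¹'
        {ξ : EuclideanSpace ℝ (Fin 3) | ‖ξ‖ ≤ δ ∧ a ≤ ξ 2},
        ‖(MeasurableEquiv.toLp 2 (Fin 3 → ℝ)).symm.symm x‖ ^ 2)
      = ∫ x in T, ∑ i, x i ^ 2 := by
    rw [hpre1]
    apply setIntegral_congr_fun hT
    intro x _
    show ‖(MeasurableEquiv.toLp 2 (Fin 3 → ℝ)).symm.symm x‖ ^ 2 = ∑ i, x i ^ 2
    rw [euclidean_normsq]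
    rfl
  rw [h1]
  -- Step 2: split off the third coordinate
  rw [← ((volume_preserving_piFinSuccAbove (fun _ : Fin 3 => ℝ) 2).symm _).setIntegral_preimage_emb
    (MeasurableEquiv.measurableEmbedding _) (fun x : Fin 3 → ℝ => ∑ i, x i ^ 2) T]
  set g := (MeasurableEquiv.piFinSuccAbove (fun _ : Fin 3 => ℝ) 2).symm with hgdef
  have hins : ∀ p : ℝ × (Fin 2 → ℝ), ∑ i, (g p) i ^ 2 = p.1 ^ 2 + ∑ j, p.2 j ^ 2 := by
    intro p
    rw [Fin.sum_univ_three, Fin.sum_univ_two,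
      show (g p) 0 = p.2 0 from rfl, show (g p) 1 = p.2 1 from rfl,
      show (g p) 2 = p.1 from rfl]
    ring
  have hg2 : ∀ p : ℝ × (Fin 2 → ℝ), (g p) 2 = p.1 := fun p => rfl
  set U : Set (ℝ × (Fin 2 → ℝ)) := {p | p.1 ^ 2 + ∑ j, p.2 j ^ 2 ≤ δ ^ 2 ∧ a ≤ p.1} with hUdef
  have hpre2 : g ⁻¹' T = U := by
    ext p
    simp only [Set.mem_preimage, hTdef, hUdef, Set.mem_setOf_eq, hins p, hg2 p]
  set F : ℝ × (Fin 2 → ℝ) → ℝ := fun p => p.1 ^ 2 + ∑ j, p.2 j ^ 2 with hFdef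
  have hmF : Measurable F :=
    (measurable_fst.pow_const 2).add
      (Finset.measurable_sum _ fun j _ => ((measurable_pi_apply j).comp measurable_snd).pow_const 2)
  have hU : MeasurableSet U :=
    (measurableSet_le hmF measurable_const).inter
      (measurableSet_le measurable_const measurable_fst)
  have h2 : (∫ p in g ⁻¹' T, ∑ i, (g p) i ^ 2) = ∫ p in U, F p := by
    rw [hpre2]
    exact setIntegral_congr_fun hU fun p _ => hins p
  rw [h2]
  -- Step 3: Fubini
  have hFc : Continuous F := by fun_prop
  have hK : IsCompact U := by
    apply Metric.isCompact_of_isClosed_isBounded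
    · exact (isClosed_le hFc continuous_const).inter
        (isClosed_le continuous_const continuous_fst)
    · apply Bornology.IsBounded.subset (Metric.isBounded_closedBall
        (x := (0 : ℝ × (Fin 2 → ℝ))) (r := δ))
      rintro p ⟨hp1, hp2⟩
      have hsum0 : (0:ℝ) ≤ ∑ j, p.2 j ^ 2 := by positivity
      rw [Metric.mem_closedBall, dist_zero_right, Prod.norm_def]
      refine max_le ?_ ?_
      · rw [Real.norm_eq_abs, abs_le]; constructor <;> nlinarith
      · rw [pi_norm_le_iff_of_nonneg hδ.le]
        intro j
        have hj : p.2 j ^ 2 ≤ ∑ i, p.2 i ^ 2 :=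
          Finset.single_le_sum (fun i _ => sq_nonneg (p.2 i)) (Finset.mem_univ j)
        rw [Real.norm_eq_abs, abs_le]; constructor <;> nlinarith
  have hInt : Integrable (U.indicator F) (((volume : Measure ℝ)).prod volume) := by
    rw [← Measure.volume_eq_prod]
    exact (ContinuousOn.integrableOn_compact hK hFc.continuousOn).integrable_indicator hU
  rw [← integral_indicator hU, Measure.volume_eq_prod, integral_prod _ hInt]
  -- Step 4: inner integral
  have hsect : ∀ t : ℝ, (∫ y : Fin 2 → ℝ, U.indicator F (t, y))
      = (Icc a δ).indicator (fun t => π / 2 * (δ ^ 4 - t ^ 4)) t := by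
    intro t
    by_cases ht : t ∈ Icc a δ
    · obtain ⟨ht1, ht2⟩ := ht
      have hδ2t : 0 ≤ δ ^ 2 - t ^ 2 := by nlinarith
      set ρ := Real.sqrt (δ ^ 2 - t ^ 2) with hρdef
      have hρ0 : 0 ≤ ρ := Real.sqrt_nonneg _
      have hρ2 : ρ ^ 2 = δ ^ 2 - t ^ 2 := Real.sq_sqrt hδ2t
      have heq : ∀ y : Fin 2 → ℝ, U.indicator F (t, y)
          = ({y : Fin 2 → ℝ | y 0 ^ 2 + y 1 ^ 2 ≤ ρ ^ 2}).indicator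
              (fun y => t ^ 2 + (y 0 ^ 2 + y 1 ^ 2)) y := by
        intro y
        have hsum : ∑ j, y j ^ 2 = y 0 ^ 2 + y 1 ^ 2 := Fin.sum_univ_two _
        by_cases hy : y 0 ^ 2 + y 1 ^ 2 ≤ ρ ^ 2
        · rw [Set.indicator_of_mem (show (t, y) ∈ U from ⟨by rw [hsum] at *; linarith [hρ2 ▸ hy], ht1⟩),
            Set.indicator_of_mem (show y ∈ _ from hy)]
          show t ^ 2 + ∑ j, y j ^ 2 = _
          rw [hsum]
        · rw [Set.indicator_of_notMem (show (t, y) ∉ U by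
              rintro ⟨hc, -⟩
              apply hy
              rw [hρ2]
              have : ∑ j, y j ^ 2 ≤ δ ^ 2 - t ^ 2 := by
                simp only [hUdef, Set.mem_setOf_eq] at hc ⊢; linarith
              rw [hsum] at this; linarith),
            Set.indicator_of_notMem (show y ∉ _ from hy)]
      have hDset : MeasurableSet {y : Fin 2 → ℝ | y 0 ^ 2 + y 1 ^ 2 ≤ ρ ^ 2} :=
        measurableSet_le (by fun_prop) measurable_const
      rw [show (fun y : Fin 2 → ℝ => U.indicator F (t, y))
          = fun y => ({y : Fin 2 → ℝ | y 0 ^ 2 + y 1 ^ 2 ≤ ρ ^ 2}).indicator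
              (fun y => t ^ 2 + (y 0 ^ 2 + y 1 ^ 2)) y from funext heq,
        integral_indicator hDset, disk_integral _ _ hρ0,
        Set.indicator_of_mem (show t ∈ Icc a δ from ⟨ht1, ht2⟩)]
      have hρ4 : ρ ^ 4 = (δ ^ 2 - t ^ 2) ^ 2 := by rw [← hρ2]; ring
      rw [hρ2, hρ4]; ring
    · have heq : ∀ y : Fin 2 → ℝ, U.indicator F (t, y) = 0 := by
        intro y
        apply Set.indicator_of_notMem
        rintro ⟨h1, h2⟩
        apply ht
        have hsum0 : (0:ℝ) ≤ ∑ j, y j ^ 2 := by positivity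
        exact ⟨h2, by nlinarith⟩
      simp only [heq, integral_zero, Set.indicator_of_notMem ht]
  rw [show (fun t => ∫ y : Fin 2 → ℝ, U.indicator F (t, y))
      = fun t => (Icc a δ).indicator (fun t => π / 2 * (δ ^ 4 - t ^ 4)) t from funext hsect]
  -- Step 5: the outer integral
  rw [integral_indicator measurableSet_Icc, integral_Icc_eq_integral_Ioc,
    ← intervalIntegral.integral_of_le ha', intervalIntegral.integral_const_mul,
    intervalIntegral.integral_sub (intervalIntegrable_const)
      ((continuous_pow 4).intervalIntegrable a δ),
    intervalIntegral.integral_const, integral_pow]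
  simp only [smul_eq_mul]
  push_cast
  ring

theorem spherical_cap_moment_ratio (δ z : ℝ) (hδ : 0 < δ) (hz0 : 0 ≤ z) (hzδ : z ≤ δ) :
    (∫ ξ in {ξ : EuclideanSpace ℝ (Fin 3) | ‖ξ‖ ≤ δ ∧ z ≤ ξ 2}, ‖ξ‖ ^ 2) /
      (∫ ξ in {ξ : EuclideanSpace ℝ (Fin 3) | ‖ξ‖ ≤ δ}, ‖ξ‖ ^ 2)
      = 1 / 2 - 5 * z / (8 * δ) + z ^ 5 / (8 * δ ^ 5) := by
  have hcap := cap_integral δ z hδ (by linarith) hzδ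
  have hball : {ξ : EuclideanSpace ℝ (Fin 3) | ‖ξ‖ ≤ δ}
      = {ξ : EuclideanSpace ℝ (Fin 3) | ‖ξ‖ ≤ δ ∧ -δ ≤ ξ 2} := by
    ext ξ
    simp only [Set.mem_setOf_eq]
    constructor
    · intro h
      refine ⟨h, ?_⟩
      have h2 : (ξ 2) ^ 2 ≤ ‖ξ‖ ^ 2 := by
        rw [euclidean_normsq]
        exact Finset.single_le_sum (fun i _ => sq_nonneg (ξ i)) (Finset.mem_univ 2)
      nlinarith [norm_nonneg ξ]
    · exact fun h => h.1
  have hc2 := cap_integral δ (-δ) hδ le_rfl (by linarith)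
  rw [hcap, hball, hc2]
  have hden : π / 2 * (δ ^ 4 * (δ - -δ) - (δ ^ 5 - (-δ) ^ 5) / 5) = 4 * π * δ ^ 5 / 5 := by
    ring
  rw [hden, div_eq_iff (by positivity : (4 : ℝ) * π * δ ^ 5 / 5 ≠ 0)]
  have hπ : π ≠ 0 := pi_ne_zero
  field_simp
  ring
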